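/- arXiv:2005.10783 — 2 statements merged into one kernel-verified Lean document; each statement's English description precedes it below -/
import Mathlib

section
/- Assume: (i) the square-root densities √f(x|θ) are continuously differentiable in each θⱼ for μ-almost every x, with f(x|θ) > 0; (ii) the per-component Fisher information I_X(θⱼ) = ∫ (∂/∂θⱼ log f(x|θ))² f(x|θ) dμ(x) exists and is a continuous function of θⱼ. Let Q(y|x) be a jointly measurable kernel density with respect to ν satisfying Q(y|x) ≤ e^ε Q(y|x') for all x, x' and ν-a.e. y (ε-differential privacy), and define f(y|θ) = ∫ Q(y|x) f(x|θ) dμ(x). Then for ν-almost every y, the map θⱼ ↦ f(y|θ) is continuously differentiable and ∂/∂θⱼ f(y|θ) = ∫ Q(y|x) (∂/∂θⱼ f(x|θ)) dμ(x). -/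
open MeasureTheory
open scoped ENNReal NNReal

open Filter
open scoped Topology


/-- Generalized dominated convergence (Riesz/Scheffé style) for lintegrals. -/
lemma genDCT {α : Type*} [MeasurableSpace α] (μ : Measure α)
    (φ h : ℕ → α → ℝ≥0∞) (H : α → ℝ≥0∞)
    (hhm : ∀ n, Measurable (h n)) (hφm : ∀ n, Measurable (φ n))
    (hφh : ∀ n, ∀ᵐ x ∂μ, φ n x ≤ h n x)
    (hφ0 : ∀ᵐ x ∂μ, Tendsto (fun n => φ n x) atTop (𝓝 0))
    (hh : ∀ᵐ x ∂μ, Tendsto (fun n => h n x) atTop (𝓝 (H x)))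
    (hint : Tendsto (fun n => ∫⁻ x, h n x ∂μ) atTop (𝓝 (∫⁻ x, H x ∂μ)))
    (hHfin : ∫⁻ x, H x ∂μ ≠ ∞) (hHm : ∀ᵐ x ∂μ, H x ≠ ∞) :
    Tendsto (fun n => ∫⁻ x, φ n x ∂μ) atTop (𝓝 0) := by
  set L := ∫⁻ x, H x ∂μ with hL
  -- Fatou on h n - φ n
  have hfatou : L ≤ atTop.liminf (fun n => ∫⁻ x, h n x - φ n x ∂μ) := by
    have h1 : ∀ᵐ x ∂μ, Tendsto (fun n => h n x - φ n x) atTop (𝓝 (H x)) := by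
      filter_upwards [hh, hφ0, hHm] with x hhx hφx hHx
      simpa using ENNReal.Tendsto.sub hhx hφx (Or.inr (by simp))
    calc L = ∫⁻ x, atTop.liminf (fun n => h n x - φ n x) ∂μ := by
            refine lintegral_congr_ae ?_
            filter_upwards [h1] with x h1x using (h1x.liminf_eq).symm
      _ ≤ atTop.liminf (fun n => ∫⁻ x, h n x - φ n x ∂μ) :=
            lintegral_liminf_le (fun n => (hhm n).sub (hφm n))
  -- split
  have hsplit : ∀ n, ∫⁻ x, h n x - φ n x ∂μ + ∫⁻ x, φ n x ∂μ = ∫⁻ x, h n x ∂μ := by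
    intro n
    rw [← lintegral_add_right' _ (hφm n).aemeasurable]
    refine lintegral_congr_ae ?_
    filter_upwards [hφh n] with x hx using tsub_add_cancel_of_le hx
  rw [ENNReal.tendsto_nhds_zero]
  intro ε hε
  set ε' := min ε 1 with hε'
  have hε'pos : 0 < ε' := lt_min hε one_pos
  have hε'top : ε' ≠ ∞ := by simp [hε']
  have hδ : ε' / 2 ≠ 0 := by simp [ENNReal.div_eq_zero_iff, hε'pos.ne']
  have hT : ∀ᶠ n in atTop, ∫⁻ x, h n x ∂μ < L + ε' / 2 := by
    refine hint.eventually_lt_const ?_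
    exact ENNReal.lt_add_right hHfin hδ
  have hB : ∀ᶠ n in atTop, L ≤ (∫⁻ x, h n x - φ n x ∂μ) + ε' / 2 := by
    rcases le_or_gt L (ε' / 2) with hc | hc
    · exact Eventually.of_forall fun n => le_add_of_nonneg_of_le zero_le hc
    · have h2 : L - ε' / 2 < L := ENNReal.sub_lt_self hHfin (lt_of_le_of_lt zero_le hc).ne' hδ
      filter_upwards [eventually_lt_of_lt_liminf (lt_of_lt_of_le h2 hfatou)] with n hn
      exact le_trans (by rw [tsub_add_cancel_of_le hc.le]) (add_le_add_left hn.le _)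
  filter_upwards [hT, hB] with n hTn hBn
  have hfin : ∫⁻ x, h n x - φ n x ∂μ ≠ ∞ := by
    refine ne_of_lt (lt_of_le_of_lt ?_ (lt_of_lt_of_le hTn le_top))
    rw [← hsplit n]; exact le_self_add
  have : (∫⁻ x, h n x - φ n x ∂μ) + ∫⁻ x, φ n x ∂μ < (∫⁻ x, h n x - φ n x ∂μ) + ε' := by
    calc (∫⁻ x, h n x - φ n x ∂μ) + ∫⁻ x, φ n x ∂μ = ∫⁻ x, h n x ∂μ := hsplit n
      _ < L + ε' / 2 := hTn
      _ ≤ ((∫⁻ x, h n x - φ n x ∂μ) + ε' / 2) + ε' / 2 := add_le_add_left hBn _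
      _ = (∫⁻ x, h n x - φ n x ∂μ) + ε' := by rw [add_assoc, ENNReal.add_halves]
  exact le_trans (le_of_lt ((ENNReal.add_lt_add_iff_left hfin).mp this)) (min_le_left _ _)

lemma main_aux {X : Type*} [MeasurableSpace X] (μ : Measure X) [SigmaFinite μ]
    (F F' : ℝ → X → ℝ)
    (hFpos : ∀ t x, 0 < F t x)
    (hFmeas : ∀ t, Measurable (F t))
    (hF'meas : ∀ t, Measurable (F' t))
    (hae : ∀ᵐ x ∂μ, (∀ t, HasDerivAt (fun r => Real.sqrt (F r x))
        (F' t x / (2 * Real.sqrt (F t x))) t)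
      ∧ Continuous fun t => F' t x / (2 * Real.sqrt (F t x)))
    (hFint : ∀ t, ∫ x, F t x ∂μ = 1)
    (hFisher_int : ∀ t, Integrable (fun x => (F' t x) ^ 2 / F t x) μ)
    (hFisher_cont : Continuous fun t => ∫ x, (F' t x) ^ 2 / F t x ∂μ)
    (q : X → ℝ) (hq : Measurable q) (hq0 : ∀ x, 0 ≤ q x) (C : ℝ) (hC : 0 ≤ C)
    (hqC : ∀ᵐ x ∂μ, q x ≤ C) :
    (∀ t, HasDerivAt (fun r => ∫ x, q x * F r x ∂μ) (∫ x, q x * F' t x ∂μ) t)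
    ∧ Continuous fun t => ∫ x, q x * F' t x ∂μ := by
  classical
  -- basic pointwise facts
  set B : ℝ → X → ℝ := fun t x => F t x + (F' t x) ^ 2 / F t x / 4 with hB
  have hsqrt_pos : ∀ t x, 0 < Real.sqrt (F t x) := fun t x => Real.sqrt_pos.2 (hFpos t x)
  have hsq : ∀ t x, Real.sqrt (F t x) ^ 2 = F t x := fun t x => Real.sq_sqrt (hFpos t x).le
  have hF'eq : ∀ t x, F' t x = 2 * Real.sqrt (F t x) * (F' t x / (2 * Real.sqrt (F t x))) := by
    intro t x
    have h2 : (2:ℝ) * Real.sqrt (F t x) ≠ 0 := mul_ne_zero two_ne_zero (hsqrt_pos t x).ne'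
    rw [mul_comm, div_mul_cancel₀ _ h2]
  have hBpos : ∀ t x, 0 ≤ B t x := by
    intro t x; have := hFpos t x; simp only [hB]; positivity
  have keyB : ∀ t x, |F' t x| ≤ B t x := by
    intro t x
    have ha := hFpos t x
    have hd : (F' t x) ^ 2 / F t x / 4 * (F t x * 4) = (F' t x) ^ 2 := by
      rw [div_div]; exact div_mul_cancel₀ _ (by positivity)
    show |F' t x| ≤ F t x + (F' t x) ^ 2 / F t x / 4
    nlinarith [sq_nonneg (2 * F t x - |F' t x|), sq_abs (F' t x), abs_nonneg (F' t x)]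
  -- integrability
  have intF : ∀ t, Integrable (F t) μ := by
    intro t
    by_contra hni
    have h1 := hFint t
    rw [integral_undef hni] at h1
    exact zero_ne_one h1
  have measB : ∀ t, Measurable (B t) :=
    fun t => (hFmeas t).add ((((hF'meas t).pow_const 2).div (hFmeas t)).div_const 4)
  have intB : ∀ t, Integrable (B t) μ :=
    fun t => (intF t).add ((hFisher_int t).div_const 4)
  have intF' : ∀ t, Integrable (F' t) μ := by
    intro t
    refine (intB t).mono' (hF'meas t).aestronglyMeasurable ?_
    exact Eventually.of_forall fun x => by rw [Real.norm_eq_abs]; exact keyB t x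
  have intBval : ∀ t, ∫ x, B t x ∂μ = 1 + (∫ x, (F' t x) ^ 2 / F t x ∂μ) / 4 := by
    intro t
    simp only [hB]
    rw [integral_add (intF t) ((hFisher_int t).div_const 4), hFint t, integral_div]
  have hIcont : Continuous fun t => ∫ x, B t x ∂μ := by
    have : (fun t => ∫ x, B t x ∂μ) = fun t => 1 + (∫ x, (F' t x) ^ 2 / F t x ∂μ) / 4 :=
      funext intBval
    rw [this]
    exact continuous_const.add (hFisher_cont.div_const 4)
  -- L¹ continuity of t ↦ F' t
  have L1cont : ∀ t₀ : ℝ, Tendsto (fun t => ∫⁻ x, ENNReal.ofReal |F' t x - F' t₀ x| ∂μ)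
      (𝓝 t₀) (𝓝 0) := by
    intro t₀
    rw [tendsto_iff_seq_tendsto]
    intro u hu
    have lint_eq : ∀ s : ℝ, ∫⁻ x, ENNReal.ofReal (B s x + B t₀ x) ∂μ
        = ENNReal.ofReal ((∫ x, B s x ∂μ) + ∫ x, B t₀ x ∂μ) := by
      intro s
      rw [← integral_add (intB s) (intB t₀)]
      exact (ofReal_integral_eq_lintegral_ofReal ((intB s).add (intB t₀))
        (Eventually.of_forall fun x => add_nonneg (hBpos s x) (hBpos t₀ x))).symm
    have lintH_eq : ∫⁻ x, ENNReal.ofReal (2 * B t₀ x) ∂μ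
        = ENNReal.ofReal (2 * ∫ x, B t₀ x ∂μ) := by
      rw [← integral_const_mul]
      exact (ofReal_integral_eq_lintegral_ofReal ((intB t₀).const_mul 2)
        (Eventually.of_forall fun x => by have := hBpos t₀ x; positivity)).symm
    apply genDCT μ (fun n x => ENNReal.ofReal |F' (u n) x - F' t₀ x|)
      (fun n x => ENNReal.ofReal (B (u n) x + B t₀ x))
      (fun x => ENNReal.ofReal (2 * B t₀ x))
    · exact fun n => ((measB (u n)).add (measB t₀)).ennreal_ofReal
    · exact fun n => (((hF'meas (u n)).sub (hF'meas t₀)).abs).ennreal_ofReal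
    · intro n
      refine Eventually.of_forall fun x => ENNReal.ofReal_le_ofReal ?_
      calc |F' (u n) x - F' t₀ x| ≤ |F' (u n) x| + |F' t₀ x| := abs_sub _ _
        _ ≤ B (u n) x + B t₀ x := add_le_add (keyB _ _) (keyB _ _)
    · filter_upwards [hae] with x hx
      have hsx : Continuous fun t => Real.sqrt (F t x) :=
        continuous_iff_continuousAt.2 fun t => (hx.1 t).continuousAt
      have hF'c : Continuous fun t => F' t x := by
        have h1 : (fun t => F' t x)
            = fun t => 2 * Real.sqrt (F t x) * (F' t x / (2 * Real.sqrt (F t x))) :=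
          funext fun t => hF'eq t x
        rw [h1]; exact (continuous_const.mul hsx).mul hx.2
      have h1 : Tendsto (fun n => F' (u n) x) atTop (𝓝 (F' t₀ x)) :=
        (hF'c.tendsto t₀).comp hu
      have h2 : Tendsto (fun n => |F' (u n) x - F' t₀ x|) atTop (𝓝 0) := by
        have := (h1.sub_const (F' t₀ x)).abs
        simpa using this
      simpa using (ENNReal.tendsto_ofReal h2)
    · filter_upwards [hae] with x hx
      have hsx : Continuous fun t => Real.sqrt (F t x) :=
        continuous_iff_continuousAt.2 fun t => (hx.1 t).continuousAt
      have hF'c : Continuous fun t => F' t x := by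
        have h1 : (fun t => F' t x)
            = fun t => 2 * Real.sqrt (F t x) * (F' t x / (2 * Real.sqrt (F t x))) :=
          funext fun t => hF'eq t x
        rw [h1]; exact (continuous_const.mul hsx).mul hx.2
      have hFc : Continuous fun t => F t x := by
        have h1 : (fun t => F t x) = fun t => Real.sqrt (F t x) ^ 2 :=
          funext fun t => (hsq t x).symm
        rw [h1]; exact hsx.pow 2
      have hBc : Continuous fun t => B t x := by
        simp only [hB]
        exact hFc.add (((hF'c.pow 2).div hFc fun t => (hFpos t x).ne').div_const 4)
      have h1 : Tendsto (fun n => B (u n) x + B t₀ x) atTop (𝓝 (2 * B t₀ x)) := by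
        rw [two_mul]
        exact ((hBc.tendsto t₀).comp hu).add_const _
      exact ENNReal.tendsto_ofReal h1
    · simp only [lint_eq, lintH_eq]
      apply ENNReal.tendsto_ofReal
      rw [two_mul]
      exact ((hIcont.tendsto t₀).comp hu).add_const _
    · rw [lintH_eq]; exact ENNReal.ofReal_ne_top
    · exact Eventually.of_forall fun x => ENNReal.ofReal_ne_top
  have hSae0 := hae
  obtain ⟨N, hNsup, hNmeas, hNnull⟩ := exists_measurable_superset_of_null (ae_iff.1 hae)
  set S : Set X := Nᶜ with hSdef
  have hSmeas : MeasurableSet S := hNmeas.compl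
  have hScnull : μ Sᶜ = 0 := by rwa [hSdef, compl_compl]
  have hSae : ∀ᵐ x ∂μ, x ∈ S := by
    rw [ae_iff]
    exact hScnull
  have hSP : ∀ x ∈ S, (∀ t, HasDerivAt (fun r => Real.sqrt (F r x))
      (F' t x / (2 * Real.sqrt (F t x))) t)
      ∧ Continuous fun t => F' t x / (2 * Real.sqrt (F t x)) := by
    intro x hx
    by_contra hc
    exact hx (hNsup hc)
  set G' : ℝ → X → ℝ := fun t x => if x ∈ S then F' t x else 0 with hG'
  have hG'meas : ∀ t, Measurable (G' t) :=
    fun t => Measurable.ite hSmeas (hF'meas t) measurable_const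
  have hG'cont : ∀ x, Continuous fun t => G' t x := by
    intro x
    by_cases hx : x ∈ S
    · simp only [hG', if_pos hx]
      have hsx : Continuous fun t => Real.sqrt (F t x) :=
        continuous_iff_continuousAt.2 fun t => ((hSP x hx).1 t).continuousAt
      have h1 : (fun t => F' t x)
          = fun t => 2 * Real.sqrt (F t x) * (F' t x / (2 * Real.sqrt (F t x))) :=
        funext fun t => hF'eq t x
      rw [h1]; exact (continuous_const.mul hsx).mul (hSP x hx).2
    · simp only [hG', if_neg hx]; exact continuous_const
  have hG'unc : Measurable (Function.uncurry G') :=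
    measurable_uncurry_of_continuous_of_measurable hG'cont hG'meas
  have hG'ae : ∀ t, F' t =ᵐ[μ] G' t := by
    intro t
    filter_upwards [hSae] with x hx
    simp [hG', if_pos hx]
  -- L¹ differentiability
  have L1deriv : ∀ t₀ : ℝ, ∀ ε : ℝ, 0 < ε → ∃ δ > 0, ∀ t : ℝ, |t - t₀| < δ →
      ∫⁻ x, ENNReal.ofReal |F t x - F t₀ x - (t - t₀) * F' t₀ x| ∂μ
        ≤ ENNReal.ofReal (ε * |t - t₀|) := by
    intro t₀ ε hε
    have hev : ∀ᶠ u in 𝓝 t₀, (∫⁻ x, ENNReal.ofReal |F' u x - F' t₀ x| ∂μ) < ENNReal.ofReal ε :=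
      (L1cont t₀).eventually_lt_const (ENNReal.ofReal_pos.2 hε)
    obtain ⟨δ, hδpos, hδ⟩ := Metric.eventually_nhds_iff.1 hev
    refine ⟨δ, hδpos, fun t ht => ?_⟩
    rcases eq_or_ne t t₀ with rfl | htne
    · simp
    have hpt : ∀ x ∈ S, ENNReal.ofReal |F t x - F t₀ x - (t - t₀) * F' t₀ x|
        ≤ ∫⁻ u in Set.uIoc t₀ t, ENNReal.ofReal |G' u x - G' t₀ x| := by
      intro x hx
      obtain ⟨hd, hc⟩ := hSP x hx
      have hsx : Continuous fun u => Real.sqrt (F u x) :=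
        continuous_iff_continuousAt.2 fun u => (hd u).continuousAt
      have hF'c : Continuous fun u => F' u x := by
        have h1 : (fun u => F' u x)
            = fun u => 2 * Real.sqrt (F u x) * (F' u x / (2 * Real.sqrt (F u x))) :=
          funext fun u => hF'eq u x
        rw [h1]; exact (continuous_const.mul hsx).mul hc
      have hFd : ∀ u, HasDerivAt (fun r => F r x) (F' u x) u := by
        intro u
        have h2 := (hd u).fun_pow 2
        have h3 : (fun r => Real.sqrt (F r x) ^ 2) = fun r => F r x := funext fun r => hsq r x
        rw [h3] at h2
        refine h2.congr_deriv ?_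
        symm
        have hne : Real.sqrt (F u x) ≠ 0 := (hsqrt_pos u x).ne'
        rw [hF'eq u x]
        push_cast
        field_simp
      have hftc : ∫ u in t₀..t, F' u x = F t x - F t₀ x :=
        intervalIntegral.integral_eq_sub_of_hasDerivAt (fun u _ => hFd u)
          (hF'c.intervalIntegrable t₀ t)
      have hsub : F t x - F t₀ x - (t - t₀) * F' t₀ x = ∫ u in t₀..t, (F' u x - F' t₀ x) := by
        rw [intervalIntegral.integral_sub (hF'c.intervalIntegrable t₀ t)
          intervalIntegrable_const, hftc, intervalIntegral.integral_const]
        simp [smul_eq_mul]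
      have habs : |∫ u in t₀..t, (F' u x - F' t₀ x)|
          ≤ ∫ u in Set.uIoc t₀ t, |F' u x - F' t₀ x| := by
        rcases le_total t₀ t with hle | hle
        · rw [Set.uIoc_of_le hle, ← intervalIntegral.integral_of_le hle]
          have h4 := intervalIntegral.norm_integral_le_integral_norm
            (f := fun u => F' u x - F' t₀ x) (μ := volume) hle
          simpa [Real.norm_eq_abs] using h4
        · rw [Set.uIoc_of_ge hle, ← intervalIntegral.integral_of_le hle,
            intervalIntegral.integral_symm, abs_neg]
          have h4 := intervalIntegral.norm_integral_le_integral_norm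
            (f := fun u => F' u x - F' t₀ x) (μ := volume) hle
          simpa [Real.norm_eq_abs] using h4
      have hint_uIoc : IntegrableOn (fun u => |F' u x - F' t₀ x|) (Set.uIoc t₀ t) volume := by
        have h5 : IntervalIntegrable (fun u => |F' u x - F' t₀ x|) volume t₀ t :=
          Continuous.intervalIntegrable ((hF'c.sub continuous_const).abs) t₀ t
        rwa [intervalIntegrable_iff] at h5
      have hlint : ENNReal.ofReal (∫ u in Set.uIoc t₀ t, |F' u x - F' t₀ x|)
          = ∫⁻ u in Set.uIoc t₀ t, ENNReal.ofReal |F' u x - F' t₀ x| :=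
        ofReal_integral_eq_lintegral_ofReal hint_uIoc
          (Eventually.of_forall fun u => abs_nonneg _)
      calc ENNReal.ofReal |F t x - F t₀ x - (t - t₀) * F' t₀ x|
          ≤ ENNReal.ofReal (∫ u in Set.uIoc t₀ t, |F' u x - F' t₀ x|) := by
            rw [hsub]; exact ENNReal.ofReal_le_ofReal habs
        _ = ∫⁻ u in Set.uIoc t₀ t, ENNReal.ofReal |F' u x - F' t₀ x| := hlint
        _ = ∫⁻ u in Set.uIoc t₀ t, ENNReal.ofReal |G' u x - G' t₀ x| := by
            refine lintegral_congr fun u => ?_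
            simp [hG', if_pos hx]
    calc ∫⁻ x, ENNReal.ofReal |F t x - F t₀ x - (t - t₀) * F' t₀ x| ∂μ
        ≤ ∫⁻ x, (∫⁻ u in Set.uIoc t₀ t, ENNReal.ofReal |G' u x - G' t₀ x|) ∂μ := by
          refine lintegral_mono_ae ?_
          filter_upwards [hSae] with x hx using hpt x hx
      _ = ∫⁻ u in Set.uIoc t₀ t, (∫⁻ x, ENNReal.ofReal |G' u x - G' t₀ x| ∂μ) := by
          refine lintegral_lintegral_swap ?_
          apply Measurable.aemeasurable
          exact (((hG'unc.comp measurable_swap).sub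
            ((hG'meas t₀).comp measurable_fst)).abs).ennreal_ofReal
      _ ≤ ∫⁻ _u in Set.uIoc t₀ t, ENNReal.ofReal ε := by
          refine setLIntegral_mono' measurableSet_uIoc fun u hu => ?_
          have h5 : |u - t₀| < δ := by
            rcases Set.mem_uIoc.1 hu with ⟨h1, h2⟩ | ⟨h1, h2⟩ <;>
              rcases abs_sub_lt_iff.1 ht with ⟨h3, h4⟩ <;>
              rw [abs_sub_lt_iff] <;> constructor <;> linarith
          have h6 := (hδ (by rwa [Real.dist_eq])).le
          calc ∫⁻ x, ENNReal.ofReal |G' u x - G' t₀ x| ∂μ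
              = ∫⁻ x, ENNReal.ofReal |F' u x - F' t₀ x| ∂μ := by
                refine lintegral_congr_ae ?_
                filter_upwards [hG'ae u, hG'ae t₀] with x h7 h8
                rw [h7, h8]
            _ ≤ ENNReal.ofReal ε := h6
      _ = ENNReal.ofReal ε * volume (Set.uIoc t₀ t) := setLIntegral_const _ _
      _ = ENNReal.ofReal (ε * |t - t₀|) := by
          rw [Set.uIoc, Real.volume_Ioc, max_sub_min_eq_abs, abs_sub_comm,
            ← ENNReal.ofReal_mul hε.le]
  -- integrability of the products with q
  have intq : ∀ g : X → ℝ, Integrable g μ → Measurable g →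
      Integrable (fun x => q x * g x) μ := by
    intro g hg hgm
    refine (hg.abs.const_mul C).mono' ((hq.mul hgm).aestronglyMeasurable) ?_
    filter_upwards [hqC] with x hx
    rw [Real.norm_eq_abs, abs_mul, abs_of_nonneg (hq0 x)]
    exact mul_le_mul_of_nonneg_right hx (abs_nonneg _)
  have intqF : ∀ t, Integrable (fun x => q x * F t x) μ :=
    fun t => intq _ (intF t) (hFmeas t)
  have intqF' : ∀ t, Integrable (fun x => q x * F' t x) μ :=
    fun t => intq _ (intF' t) (hF'meas t)
  -- the key bound
  have qbound : ∀ g : X → ℝ, Integrable g μ → Measurable g →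
      |∫ x, q x * g x ∂μ| ≤ C * (∫⁻ x, ENNReal.ofReal |g x| ∂μ).toReal := by
    intro g hg hgm
    have h2 : |∫ x, q x * g x ∂μ| ≤ ∫ x, |q x * g x| ∂μ := by
      have h2' := norm_integral_le_integral_norm (f := fun x => q x * g x) (μ := μ)
      simpa only [Real.norm_eq_abs] using h2'
    have h3 : ∫ x, |q x * g x| ∂μ ≤ ∫ x, C * |g x| ∂μ := by
      refine integral_mono_ae (intq _ hg hgm).abs (hg.abs.const_mul C) ?_
      filter_upwards [hqC] with x hx
      rw [abs_mul, abs_of_nonneg (hq0 x)]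
      exact mul_le_mul_of_nonneg_right hx (abs_nonneg _)
    have h4 : ∫ x, C * |g x| ∂μ = C * ∫ x, |g x| ∂μ := integral_const_mul _ _
    have h5 : ∫ x, |g x| ∂μ = (∫⁻ x, ENNReal.ofReal |g x| ∂μ).toReal := by
      rw [integral_eq_lintegral_of_nonneg_ae (Eventually.of_forall fun x => abs_nonneg (g x))
        hg.abs.aestronglyMeasurable]
    calc |∫ x, q x * g x ∂μ| ≤ ∫ x, |q x * g x| ∂μ := h2
      _ ≤ ∫ x, C * |g x| ∂μ := h3
      _ = C * (∫⁻ x, ENNReal.ofReal |g x| ∂μ).toReal := by rw [h4, h5]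
  constructor
  · -- differentiability
    intro t₀
    rw [hasDerivAt_iff_tendsto_slope, Metric.tendsto_nhdsWithin_nhds]
    intro ε hε
    have hε2 : 0 < ε / (2 * (C + 1)) := by positivity
    obtain ⟨δ, hδpos, hδ⟩ := L1deriv t₀ _ hε2
    refine ⟨δ, hδpos, fun {t} hmem hdist => ?_⟩
    have htne : t ≠ t₀ := hmem
    rw [Real.dist_eq] at hdist
    have habs : 0 < |t - t₀| := abs_pos.2 (sub_ne_zero.2 htne)
    have hnum : ∫ x, q x * (F t x - F t₀ x - (t - t₀) * F' t₀ x) ∂μ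
        = ∫ x, q x * F t x ∂μ - ∫ x, q x * F t₀ x ∂μ
          - (t - t₀) * ∫ x, q x * F' t₀ x ∂μ := by
      have h0 : (fun x => q x * (F t x - F t₀ x - (t - t₀) * F' t₀ x))
          = fun x => (q x * F t x - q x * F t₀ x) - (t - t₀) * (q x * F' t₀ x) :=
        funext fun x => by ring
      have hi1 : Integrable (fun x => q x * F t x - q x * F t₀ x) μ :=
        (intqF t).sub (intqF t₀)
      have hi2 : Integrable (fun x => (t - t₀) * (q x * F' t₀ x)) μ :=
        (intqF' t₀).const_mul _
      rw [h0, integral_sub hi1 hi2, integral_sub (intqF t) (intqF t₀), integral_const_mul]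
    have hslope : slope (fun r => ∫ x, q x * F r x ∂μ) t₀ t - ∫ x, q x * F' t₀ x ∂μ
        = (∫ x, q x * (F t x - F t₀ x - (t - t₀) * F' t₀ x) ∂μ) / (t - t₀) := by
      rw [slope_def_field, hnum]
      field_simp [sub_ne_zero.2 htne]
    rw [Real.dist_eq, hslope, abs_div]
    have hbd := qbound (fun x => F t x - F t₀ x - (t - t₀) * F' t₀ x)
      (((intF t).sub (intF t₀)).sub ((intF' t₀).const_mul (t - t₀)))
      (((hFmeas t).sub (hFmeas t₀)).sub ((hF'meas t₀).const_mul (t - t₀)))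
    have hlt := hδ t hdist
    have htr : (∫⁻ x, ENNReal.ofReal |F t x - F t₀ x - (t - t₀) * F' t₀ x| ∂μ).toReal
        ≤ ε / (2 * (C + 1)) * |t - t₀| := by
      have := ENNReal.toReal_mono ENNReal.ofReal_ne_top hlt
      rwa [ENNReal.toReal_ofReal (by positivity)] at this
    have hD : (0:ℝ) < 2 * (C + 1) := by linarith
    calc |∫ x, q x * (F t x - F t₀ x - (t - t₀) * F' t₀ x) ∂μ| / |t - t₀|
        ≤ C * (ε / (2 * (C + 1)) * |t - t₀|) / |t - t₀| := by
          gcongr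
          exact hbd.trans (mul_le_mul_of_nonneg_left htr hC)
      _ = C * (ε / (2 * (C + 1))) := by
          rw [mul_div_assoc, mul_div_cancel_right₀ _ habs.ne']
      _ = (C * ε) / (2 * (C + 1)) := by ring
      _ < ε := by
          rw [div_lt_iff₀ hD]
          nlinarith
  · -- continuity
    rw [continuous_iff_continuousAt]
    intro t₀
    have hb : Tendsto (fun t => C * (∫⁻ x, ENNReal.ofReal |F' t x - F' t₀ x| ∂μ).toReal)
        (𝓝 t₀) (𝓝 (C * 0)) :=
      (((ENNReal.tendsto_toReal ENNReal.zero_ne_top).comp (L1cont t₀)).const_mul C)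
    rw [mul_zero] at hb
    rw [ContinuousAt, tendsto_iff_dist_tendsto_zero]
    refine squeeze_zero (fun t => dist_nonneg) (fun t => ?_) hb
    rw [Real.dist_eq]
    have heq : ∫ x, q x * F' t x ∂μ - ∫ x, q x * F' t₀ x ∂μ
        = ∫ x, q x * (F' t x - F' t₀ x) ∂μ := by
      rw [← integral_sub (intqF' t) (intqF' t₀)]
      congr 1; funext x; ring
    rw [heq]
    exact qbound (fun x => F' t x - F' t₀ x) ((intF' t).sub (intF' t₀))
      ((hF'meas t).sub (hF'meas t₀))

/-- (Regularity lemma) Assume (i) the square-root densities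
`√f(x|θ)` are continuously differentiable in each coordinate `θⱼ` for μ-a.e. `x`, with
`f(x|θ) > 0` (here `f'` denotes the partial derivatives of `f`, so that
`∂_{θⱼ} √f = f'ⱼ / (2√f)`); (ii) the per-component Fisher information
`I_X(θⱼ) = ∫ (∂_{θⱼ} log f(x|θ))² f(x|θ) dμ(x) = ∫ (f'ⱼ)²/f dμ` exists and is continuous
in `θⱼ`. If `Q(y|x)` is an ε-differentially private kernel density and
`f(y|θ) = ∫ Q(y|x) f(x|θ) dμ(x)`, then for ν-a.e. `y` the map `θⱼ ↦ f(y|θ)` is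
continuously differentiable with `∂_{θⱼ} f(y|θ) = ∫ Q(y|x) ∂_{θⱼ} f(x|θ) dμ(x)`. -/
theorem dp_marginal_density_differentiable {X Y : Type*}
    [MeasurableSpace X] [MeasurableSpace Y]
    (d : ℕ) (μ : Measure X) (ν : Measure Y) [SigmaFinite μ] [SigmaFinite ν] (ε : ℝ)
    (hε : 0 < ε)
    (f : (Fin d → ℝ) → X → ℝ)
    (hfpos : ∀ θ x, 0 < f θ x)
    (hfmeas : ∀ θ, Measurable (f θ))
    (hfdens : ∀ θ, ∫ x, f θ x ∂μ = 1)
    (f' : (Fin d → ℝ) → X → Fin d → ℝ)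
    (hf'meas : ∀ θ j, Measurable fun x => f' θ x j)
    (hsqrtC1 : ∀ (θ : Fin d → ℝ) (j : Fin d), ∀ᵐ x ∂μ,
      (∀ t : ℝ, HasDerivAt (fun r => Real.sqrt (f (Function.update θ j r) x))
        (f' (Function.update θ j t) x j / (2 * Real.sqrt (f (Function.update θ j t) x))) t)
      ∧ Continuous fun t : ℝ =>
          f' (Function.update θ j t) x j / (2 * Real.sqrt (f (Function.update θ j t) x)))
    (hFisher_int : ∀ (θ : Fin d → ℝ) (j : Fin d),
      Integrable (fun x => (f' θ x j) ^ 2 / f θ x) μ)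
    (hFisher_cont : ∀ (θ : Fin d → ℝ) (j : Fin d), Continuous fun t : ℝ =>
      ∫ x, (f' (Function.update θ j t) x j) ^ 2 / f (Function.update θ j t) x ∂μ)
    (Q : Y → X → ℝ) (hQmeas : Measurable (Function.uncurry Q))
    (hQpos : ∀ y x, 0 ≤ Q y x) (hQdens : ∀ x, ∫ y, Q y x ∂ν = 1)
    (hDP : ∀ x x', ∀ᵐ y ∂ν, Q y x ≤ Real.exp ε * Q y x') :
    ∀ (θ : Fin d → ℝ) (j : Fin d), ∀ᵐ y ∂ν,
      (∀ t : ℝ, HasDerivAt (fun r => ∫ x, Q y x * f (Function.update θ j r) x ∂μ)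
        (∫ x, Q y x * f' (Function.update θ j t) x j ∂μ) t)
      ∧ Continuous fun t : ℝ => ∫ x, Q y x * f' (Function.update θ j t) x j ∂μ := by
  intro θ j
  have hXne : Nonempty X := by
    by_contra h
    rw [not_nonempty_iff] at h
    have h1 := hfdens θ
    rw [integral_of_isEmpty] at h1
    exact zero_ne_one h1
  obtain ⟨x₀⟩ := hXne
  have hmeasQ0 : Measurable fun y => Q y x₀ :=
    hQmeas.comp (measurable_id.prodMk measurable_const)
  have hBmeas : MeasurableSet {p : Y × X | Real.exp ε * Q p.1 x₀ < Q p.1 p.2} :=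
    measurableSet_lt (measurable_const.mul (hmeasQ0.comp measurable_fst)) hQmeas
  have hprod : (ν.prod μ) {p : Y × X | Real.exp ε * Q p.1 x₀ < Q p.1 p.2} = 0 := by
    rw [Measure.prod_apply_symm hBmeas]
    have h0 : ∀ x : X, ν {a : Y | Real.exp ε * Q a x₀ < Q a x} = 0 := by
      intro x
      have h1 := hDP x x₀
      rw [ae_iff] at h1
      convert h1 using 2
      ext y
      simp [not_le]
    simp [h0]
  have hae_y : ∀ᵐ y ∂ν, ∀ᵐ x ∂μ, Q y x ≤ Real.exp ε * Q y x₀ := by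
    have h2 : ∀ᵐ (p : Y × X) ∂(ν.prod μ), Q p.1 p.2 ≤ Real.exp ε * Q p.1 x₀ := by
      rw [ae_iff]
      convert hprod using 2
      ext p
      simp [not_le]
    exact Measure.ae_ae_of_ae_prod h2
  filter_upwards [hae_y] with y hy
  exact main_aux μ (fun t => f (Function.update θ j t))
    (fun t x => f' (Function.update θ j t) x j)
    (fun t x => hfpos _ x) (fun t => hfmeas _) (fun t => hf'meas _ j)
    (hsqrtC1 θ j) (fun t => hfdens _) (fun t => hFisher_int _ j) (hFisher_cont θ j)
    (Q y) (hQmeas.comp (measurable_const.prodMk measurable_id)) (hQpos y)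
    (Real.exp ε * Q y x₀) (mul_nonneg (Real.exp_pos ε).le (hQpos y x₀)) hy
end

section
/- Let X ~ Bern(p) with 0 < p < 1, and let S(X) be the Bernoulli score: S(1) = 1/p and S(0) = −1/(1−p). Set σ = max{ 1/(p √(log(1/p))), 1/((1−p) √(log(1/(1−p)))) }. Then E[exp((S(X)/σ)²)] = p·exp(1/(pσ)²) + (1−p)·exp(1/((1−p)σ)²) ≤ 2, i.e. S(X) is sub-Gaussian with parameter σ. Moreover, if p = θ with s/(2d) ≤ θ ≤ s/d ≤ 1/2, then σ² = 1/(θ² log(1/θ)) ≤ c₀ d² / (s² log(d/s)) for an absolute constant c₀. -/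
private lemma keyA (θ : ℝ) (h0 : 0 < θ) (h2 : θ ≤ 1/2) :
    θ^2 * Real.log (1/θ) ≤ (1-θ)^2 * Real.log (1/(1-θ)) := by
  have h1θ : (0:ℝ) < 1 - θ := by linarith
  have hL2 : θ ≤ Real.log (1/(1-θ)) := by
    have := Real.log_le_sub_one_of_pos h1θ
    rw [one_div, Real.log_inv]; linarith
  rcases le_or_gt θ (1/4) with hc | hc
  · set r := Real.sqrt θ with hr
    have hrpos : 0 < r := Real.sqrt_pos.2 h0
    have hrsq : r^2 = θ := Real.sq_sqrt h0.le
    have hrle : r ≤ 1/2 := by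
      have : r^2 ≤ (1/2:ℝ)^2 := by rw [hrsq]; norm_num; linarith
      nlinarith
    have hlog : Real.log (1/θ) ≤ 2*(1/r - 1) := by
      have hx : (0:ℝ) < 1/r := by positivity
      have h := Real.log_le_sub_one_of_pos hx
      have : Real.log (1/θ) = 2 * Real.log (1/r) := by
        rw [one_div, one_div, Real.log_inv, Real.log_inv, ← hrsq, Real.log_pow]
        push_cast; ring
      rw [this]; linarith
    have step1 : θ^2 * Real.log (1/θ) ≤ θ * (1-θ)^2 := by
      have h1 : θ^2 * Real.log (1/θ) ≤ θ^2 * (2*(1/r - 1)) := by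
        apply mul_le_mul_of_nonneg_left hlog (by positivity)
      have h2' : θ^2 * (2*(1/r-1)) = 2*r^3 - 2*r^4 := by
        rw [← hrsq]; field_simp
      have h3 : 2*r^3 - 2*r^4 ≤ r^2 * (1-r^2)^2 := by
        nlinarith [mul_nonneg (sq_nonneg r) (by linarith : (0:ℝ) ≤ 1 - 2*r),
          pow_nonneg hrpos.le 6]
      calc θ^2 * Real.log (1/θ) ≤ 2*r^3 - 2*r^4 := by rw [← h2']; exact h1
        _ ≤ r^2 * (1-r^2)^2 := h3
        _ = θ * (1-θ)^2 := by rw [hrsq]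
    calc θ^2 * Real.log (1/θ) ≤ θ * (1-θ)^2 := step1
      _ ≤ (1-θ)^2 * Real.log (1/(1-θ)) := by nlinarith [sq_nonneg (1-θ)]
  · have hl1 := Real.log_two_gt_d9
    have hl2' := Real.log_two_lt_d9
    have hL2' : Real.log 2 - 1 + 2*θ ≤ Real.log (1/(1-θ)) := by
      have hx : (0:ℝ) < 2*(1-θ) := by linarith
      have h := Real.log_le_sub_one_of_pos hx
      rw [Real.log_mul (by norm_num) (by linarith)] at h
      rw [one_div, Real.log_inv]; linarith
    have hL1' : Real.log (1/θ) ≤ 1/(2*θ) - 1 + Real.log 2 := by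
      have hx : (0:ℝ) < 1/(2*θ) := by positivity
      have h := Real.log_le_sub_one_of_pos hx
      have e : Real.log (1/(2*θ)) = -Real.log 2 - Real.log θ := by
        rw [one_div, Real.log_inv, Real.log_mul (by norm_num) (ne_of_gt h0)]; ring
      rw [one_div, Real.log_inv]; rw [e] at h; linarith
    have step1 : θ^2 * Real.log (1/θ) ≤ θ/2 - (1-Real.log 2)*θ^2 := by
      have h1 : θ^2 * Real.log (1/θ) ≤ θ^2 * (1/(2*θ) - 1 + Real.log 2) :=
        mul_le_mul_of_nonneg_left hL1' (by positivity)
      have : θ^2 * (1/(2*θ) - 1 + Real.log 2) = θ/2 - (1-Real.log 2)*θ^2 := by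
        field_simp; ring
      linarith
    have step2 : θ/2 - (1-Real.log 2)*θ^2 ≤ (1-θ)^2 * (Real.log 2 - 1 + 2*θ) := by
      set l := Real.log 2
      nlinarith [sq_nonneg (θ - 1/2), mul_nonneg (sub_nonneg.2 hc.le) (sub_nonneg.2 h2)]
    have step3 : (1-θ)^2 * (Real.log 2 - 1 + 2*θ) ≤ (1-θ)^2 * Real.log (1/(1-θ)) :=
      mul_le_mul_of_nonneg_left hL2' (by positivity)
    linarith

private lemma term_le (p σ : ℝ) (hp : 0 < p) (hp1 : p < 1)
    (hσ : 1 / (p * Real.sqrt (Real.log (1/p))) ≤ σ) :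
    p * Real.exp ((1 / (p * σ))^2) ≤ 1 := by
  have hL : 0 < Real.log (1/p) := Real.log_pos (one_lt_one_div hp hp1)
  have hs : 0 < Real.sqrt (Real.log (1/p)) := Real.sqrt_pos.2 hL
  have ha : 0 < 1 / (p * Real.sqrt (Real.log (1/p))) := by positivity
  have hσ0 : 0 < σ := lt_of_lt_of_le ha hσ
  have hpa : p * (1 / (p * Real.sqrt (Real.log (1/p)))) = 1 / Real.sqrt (Real.log (1/p)) := by
    field_simp
  have h1 : 1 / (p * σ) ≤ Real.sqrt (Real.log (1/p)) := by
    have h2 : 1 / (p * σ) ≤ 1 / (p * (1 / (p * Real.sqrt (Real.log (1/p))))) := by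
      apply one_div_le_one_div_of_le (by positivity)
      exact mul_le_mul_of_nonneg_left hσ hp.le
    rw [hpa, one_div_one_div] at h2
    exact h2
  have h3 : (1 / (p * σ))^2 ≤ Real.log (1/p) := by
    have hnn : 0 ≤ 1 / (p * σ) := by positivity
    calc (1 / (p * σ))^2 ≤ (Real.sqrt (Real.log (1/p)))^2 := by
          exact pow_le_pow_left₀ hnn h1 2
      _ = Real.log (1/p) := Real.sq_sqrt hL.le
  have h4 : Real.exp ((1 / (p * σ))^2) ≤ 1 / p := by
    calc Real.exp ((1 / (p * σ))^2) ≤ Real.exp (Real.log (1/p)) := Real.exp_le_exp.2 h3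
      _ = 1 / p := Real.exp_log (by positivity)
  calc p * Real.exp ((1 / (p * σ))^2) ≤ p * (1/p) := mul_le_mul_of_nonneg_left h4 hp.le
    _ = 1 := by field_simp

/-- (Bernoulli score is sub-Gaussian) For `X ~ Bern(p)`, `0 < p < 1`,
with score `S(1) = 1/p`, `S(0) = −1/(1−p)` and
`σ = max{1/(p√(log(1/p))), 1/((1−p)√(log(1/(1−p))))}`, one has
`E[exp((S(X)/σ)²)] = p·exp(1/(pσ)²) + (1−p)·exp(1/((1−p)σ)²) ≤ 2`, i.e. the score is
sub-Gaussian with parameter `σ`. Moreover there is an absolute constant `c₀` such that if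
`p = θ` with `s/(2d) ≤ θ ≤ s/d ≤ 1/2`, then
`σ² = 1/(θ² log(1/θ)) ≤ c₀ d²/(s² log(d/s))`. -/
theorem bernoulli_score_subGaussian :
    (∀ p : ℝ, 0 < p → p < 1 →
      p * Real.exp ((1 / (p * max (1 / (p * Real.sqrt (Real.log (1 / p))))
            (1 / ((1 - p) * Real.sqrt (Real.log (1 / (1 - p))))))) ^ 2)
        + (1 - p) * Real.exp ((1 / ((1 - p) * max (1 / (p * Real.sqrt (Real.log (1 / p))))
            (1 / ((1 - p) * Real.sqrt (Real.log (1 / (1 - p))))))) ^ 2) ≤ 2)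
    ∧ ∃ c₀ : ℝ, 0 < c₀ ∧ ∀ s d θ : ℝ, 0 < s → 0 < d →
        s / (2 * d) ≤ θ → θ ≤ s / d → s / d ≤ 1 / 2 →
        (max (1 / (θ * Real.sqrt (Real.log (1 / θ))))
            (1 / ((1 - θ) * Real.sqrt (Real.log (1 / (1 - θ)))))) ^ 2
          = 1 / (θ ^ 2 * Real.log (1 / θ))
        ∧ 1 / (θ ^ 2 * Real.log (1 / θ)) ≤ c₀ * d ^ 2 / (s ^ 2 * Real.log (d / s)) := by
  constructor
  · intro p hp hp1
    set σ := max (1 / (p * Real.sqrt (Real.log (1 / p))))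
      (1 / ((1 - p) * Real.sqrt (Real.log (1 / (1 - p))))) with hσdef
    have t1 : p * Real.exp ((1 / (p * σ)) ^ 2) ≤ 1 :=
      term_le p σ hp hp1 (le_max_left _ _)
    have t2 : (1 - p) * Real.exp ((1 / ((1 - p) * σ)) ^ 2) ≤ 1 := by
      have h1p : 0 < 1 - p := by linarith
      have h1p1 : 1 - p < 1 := by linarith
      exact term_le (1 - p) σ h1p h1p1 (le_max_right _ _)
    linarith
  · refine ⟨4, by norm_num, fun s d θ hs hd h1 h2 h3 => ?_⟩
    have hθ0 : 0 < θ := lt_of_lt_of_le (by positivity) h1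
    have hsd : 0 < s / d := by positivity
    have hθhalf : θ ≤ 1/2 := le_trans h2 h3
    have h1θ : (0:ℝ) < 1 - θ := by linarith
    have hL1 : 0 < Real.log (1/θ) := Real.log_pos (one_lt_one_div hθ0 (by linarith))
    have hL2 : 0 < Real.log (1/(1-θ)) := Real.log_pos (one_lt_one_div h1θ (by linarith))
    have hs1 : 0 < Real.sqrt (Real.log (1/θ)) := Real.sqrt_pos.2 hL1
    have hs2 : 0 < Real.sqrt (Real.log (1/(1-θ))) := Real.sqrt_pos.2 hL2
    have hmax : max (1 / (θ * Real.sqrt (Real.log (1 / θ))))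
        (1 / ((1 - θ) * Real.sqrt (Real.log (1 / (1 - θ)))))
        = 1 / (θ * Real.sqrt (Real.log (1 / θ))) := by
      apply max_eq_left
      apply one_div_le_one_div_of_le (by positivity)
      have key := keyA θ hθ0 hθhalf
      have e1 : θ * Real.sqrt (Real.log (1/θ)) = Real.sqrt (θ^2 * Real.log (1/θ)) := by
        rw [Real.sqrt_mul (by positivity), Real.sqrt_sq hθ0.le]
      have e2 : (1-θ) * Real.sqrt (Real.log (1/(1-θ)))
          = Real.sqrt ((1-θ)^2 * Real.log (1/(1-θ))) := by
        rw [Real.sqrt_mul (by positivity), Real.sqrt_sq h1θ.le]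
      rw [e1, e2]
      exact Real.sqrt_le_sqrt key
    constructor
    · rw [hmax, div_pow, one_pow, mul_pow, Real.sq_sqrt hL1.le]
    · have hds : (2:ℝ) ≤ d / s := by
        have h3' := (div_le_div_iff₀ hd (by norm_num : (0:ℝ) < 2)).1 h3
        calc (2:ℝ) = 2 * s / s := by field_simp
          _ ≤ d / s := by gcongr; linarith
      have hLds : 0 < Real.log (d/s) := Real.log_pos (by linarith)
      have hlog_le : Real.log (d/s) ≤ Real.log (1/θ) := by
        apply Real.log_le_log (by positivity)
        have := one_div_le_one_div_of_le hθ0 h2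
        rwa [one_div_div] at this
      have hθ2 : s^2 / (4 * d^2) ≤ θ^2 := by
        have : s / (2*d) ≤ θ := h1
        have h' : (s/(2*d))^2 ≤ θ^2 := pow_le_pow_left₀ (by positivity) this 2
        calc s^2 / (4*d^2) = (s/(2*d))^2 := by ring
          _ ≤ θ^2 := h'
      have hlow : s^2 / (4 * d^2) * Real.log (d/s) ≤ θ^2 * Real.log (1/θ) :=
        mul_le_mul hθ2 hlog_le hLds.le (by positivity)
      have hlowpos : 0 < s^2 / (4 * d^2) * Real.log (d/s) := by positivity
      have := one_div_le_one_div_of_le hlowpos hlow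
      calc 1 / (θ^2 * Real.log (1/θ)) ≤ 1 / (s^2 / (4*d^2) * Real.log (d/s)) := this
        _ = 4 * d^2 / (s^2 * Real.log (d/s)) := by
            rw [div_mul_eq_mul_div, one_div_div]
end
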